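/- Binomial Laplace-transform identity for the kl deviation: if K ∼ Binomial(m, p) with 0 < p < 1, then E[ e^{m·kl(K/m, p)} ] = Σ_{k=0}^{m} C(m,k) (k/m)^k (1 − k/m)^{m−k}, a quantity independent of p. -/

import Mathlib

/-- `kl(a,b) = a ln(a/b) + (1−a) ln((1−a)/(1−b))`, the KL divergence between
Bernoulli distributions, with the conventions `0·ln 0 = 0` and `0·ln(0/0) = 0`. -/
noncomputable def klBer (a b : ℝ) : ℝ :=
  (if a = 0 then 0 else a * Real.log (a / b)) +
  (if a = 1 then 0 else (1 - a) * Real.log ((1 - a) / (1 - b)))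

/-- Binomial Laplace-transform identity for the kl deviation: if
`K ∼ Binomial(m, p)` with `0 < p < 1`, then
`E[e^{m·kl(K/m, p)}] = Σ_{k=0}^{m} C(m,k) (k/m)^k (1 − k/m)^{m−k}`,
a quantity independent of `p`. -/
theorem binomial_kl_moment (m : ℕ) (hm : 0 < m) (p : ℝ) (hp0 : 0 < p) (hp1 : p < 1) :
    ∑ k ∈ Finset.range (m + 1),
        (m.choose k : ℝ) * p ^ k * (1 - p) ^ (m - k) *
          Real.exp (m * klBer ((k : ℝ) / m) p)
      = ∑ k ∈ Finset.range (m + 1),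
          (m.choose k : ℝ) * ((k : ℝ) / m) ^ k * (1 - (k : ℝ) / m) ^ (m - k) := by
  have hm' : (0:ℝ) < m := Nat.cast_pos.mpr hm
  have hq : (0:ℝ) < 1 - p := by linarith
  refine Finset.sum_congr rfl ?_
  intro k hk
  have hkm : k ≤ m := Nat.lt_succ_iff.mp (Finset.mem_range.mp hk)
  rcases eq_or_ne k 0 with rfl | hk0
  · have h1 : klBer 0 p = Real.log (1 - p)⁻¹ := by
      simp [klBer, Real.log_inv]
    simp only [Nat.cast_zero, zero_div, h1, Real.exp_nat_mul,
      Real.exp_log (by positivity : (0:ℝ) < (1-p)⁻¹)]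
    rw [inv_pow]
    field_simp
    simp
  rcases eq_or_ne k m with rfl | hkm'
  · have ha : (k:ℝ)/(k:ℝ) = 1 := div_self (by positivity)
    have h1 : klBer ((k:ℝ)/k) p = Real.log p⁻¹ := by
      rw [ha]; simp [klBer, Real.log_inv]
    simp only [h1, Real.exp_nat_mul, Real.exp_log (by positivity : (0:ℝ) < p⁻¹)]
    rw [inv_pow, ha]
    field_simp
    simp
  · have hk0' : (0:ℝ) < k := Nat.cast_pos.mpr (Nat.pos_of_ne_zero hk0)
    have ha0 : (0:ℝ) < (k:ℝ)/m := by positivity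
    have ha1 : (k:ℝ)/m < 1 := by
      rw [div_lt_one hm']
      exact_mod_cast lt_of_le_of_ne hkm hkm'
    have h1a : (0:ℝ) < 1 - (k:ℝ)/m := by linarith
    have hma : (m:ℝ) * ((k:ℝ)/m) = k := by field_simp
    have hm1a : (m:ℝ) * (1 - (k:ℝ)/m) = (m - k : ℕ) := by
      push_cast [Nat.cast_sub hkm]
      field_simp
    rw [klBer, if_neg (ne_of_gt ha0), if_neg (ne_of_lt ha1), mul_add, ← mul_assoc,
      ← mul_assoc, hma, hm1a, Real.exp_add, Real.exp_nat_mul, Real.exp_nat_mul,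
      Real.exp_log (by positivity), Real.exp_log (by positivity)]
    have e1 : ((k:ℝ)/m/p)^k = ((k:ℝ)/m)^k / p^k := div_pow _ _ _
    have e2 : ((1-(k:ℝ)/m)/(1-p))^(m-k) = (1-(k:ℝ)/m)^(m-k)/(1-p)^(m-k) := div_pow _ _ _
    rw [e1, e2, div_mul_div_comm]
    set A := ((k:ℝ)/(m:ℝ))^k with hA
    set B := (1 - (k:ℝ)/(m:ℝ))^(m-k) with hB
    have hP : p ^ k ≠ 0 := by positivity
    have hQ : (1 - p) ^ (m - k) ≠ 0 := by positivity
    field_simp
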